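/- For all x ∈ ℝ one has 0 < (2 + sin(e^{x²}))/(4(x² + 1)) ≤ 3/4, so that c₁(x) < c₂(x) for all x; the functions c₁ and c₂ are bounded; and for every p ∈ ℝ every connected component of the set {x ∈ ℝ : c₁(x) ≤ p ≤ c₂(x)} is compact. -/
import Mathlib

lemma exists_sin_eq_ge (a y : ℝ) : ∃ t ≥ a, Real.sin t = Real.sin y := by
  refine ⟨y + (⌈(a - y) / (2 * Real.pi)⌉₊ : ℝ) * (2 * Real.pi), ?_,
    Real.sin_add_nat_mul_two_pi y _⟩
  have hπ : (0:ℝ) < 2 * Real.pi := by positivity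
  have h := Nat.le_ceil ((a - y) / (2 * Real.pi))
  have h2 := (div_le_iff₀ hπ).mp h
  linarith

lemma exists_sin_eq_le (a y : ℝ) : ∃ t ≤ a, Real.sin t = Real.sin y := by
  refine ⟨y + ((-⌈(y - a) / (2 * Real.pi)⌉₊ : ℤ) : ℝ) * (2 * Real.pi), ?_,
    Real.sin_add_int_mul_two_pi y _⟩
  have hπ : (0:ℝ) < 2 * Real.pi := by positivity
  have h := Nat.le_ceil ((y - a) / (2 * Real.pi))
  have h2 := (div_le_iff₀ hπ).mp h
  push_cast
  linarith

/-- With `c₁(x) = sin x + (2 + sin(e^{x²}))/(4(x² + 1))` and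
`c₂(x) = sin x + 1`: for all `x`, `0 < (2 + sin(e^{x²}))/(4(x² + 1)) ≤ 3/4`, so that
`c₁ < c₂` everywhere; `c₁` and `c₂` are bounded; and for every `p ∈ ℝ` every connected
component of `{x | c₁(x) ≤ p ≤ c₂(x)}` is compact. -/
theorem stmt16 (c₁ c₂ : ℝ → ℝ)
    (hc₁ : ∀ x : ℝ, c₁ x = Real.sin x +
      (2 + Real.sin (Real.exp (x ^ 2))) / (4 * (x ^ 2 + 1)))
    (hc₂ : ∀ x : ℝ, c₂ x = Real.sin x + 1) :
    (∀ x : ℝ, 0 < (2 + Real.sin (Real.exp (x ^ 2))) / (4 * (x ^ 2 + 1)) ∧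
      (2 + Real.sin (Real.exp (x ^ 2))) / (4 * (x ^ 2 + 1)) ≤ 3 / 4) ∧
    (∀ x : ℝ, c₁ x < c₂ x) ∧
    (∃ M : ℝ, ∀ x : ℝ, |c₁ x| ≤ M ∧ |c₂ x| ≤ M) ∧
    (∀ p : ℝ, ∀ x ∈ {x : ℝ | c₁ x ≤ p ∧ p ≤ c₂ x},
      IsCompact (connectedComponentIn {x : ℝ | c₁ x ≤ p ∧ p ≤ c₂ x} x)) := by
  have key : ∀ x : ℝ, 0 < (2 + Real.sin (Real.exp (x ^ 2))) / (4 * (x ^ 2 + 1)) ∧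
      (2 + Real.sin (Real.exp (x ^ 2))) / (4 * (x ^ 2 + 1)) ≤ 3 / 4 := by
    intro x
    have h1 := Real.neg_one_le_sin (Real.exp (x ^ 2))
    have h2 := Real.sin_le_one (Real.exp (x ^ 2))
    have hd : (0:ℝ) < 4 * (x ^ 2 + 1) := by positivity
    constructor
    · apply div_pos (by linarith) hd
    · rw [div_le_iff₀ hd]; nlinarith
  refine ⟨key, ?_, ?_, ?_⟩
  · intro x
    rw [hc₁, hc₂]
    have := (key x).2
    linarith
  · refine ⟨2, fun x => ?_⟩
    have h1 := Real.neg_one_le_sin x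
    have h2 := Real.sin_le_one x
    have hk := key x
    constructor <;> rw [abs_le] <;> constructor <;>
      first
        | (rw [hc₁]; linarith [hk.1, hk.2])
        | (rw [hc₂]; linarith)
  · intro p x hx
    set S : Set ℝ := {x : ℝ | c₁ x ≤ p ∧ p ≤ c₂ x} with hS
    set C := connectedComponentIn S x with hCdef
    have hcont1 : Continuous c₁ := by
      have : c₁ = fun x => Real.sin x +
          (2 + Real.sin (Real.exp (x ^ 2))) / (4 * (x ^ 2 + 1)) := funext hc₁
      rw [this]
      refine Real.continuous_sin.add (Continuous.div (by fun_prop) (by fun_prop) ?_)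
      intro x; positivity
    have hcont2 : Continuous c₂ := by
      have : c₂ = fun x => Real.sin x + 1 := funext hc₂
      rw [this]; fun_prop
    have hSclosed : IsClosed S := by
      have : S = {x | c₁ x ≤ p} ∩ {x | p ≤ c₂ x} := rfl
      rw [this]
      exact (isClosed_le hcont1 continuous_const).inter
        (isClosed_le continuous_const hcont2)
    have hxC : x ∈ C := mem_connectedComponentIn hx
    have hCS : C ⊆ S := connectedComponentIn_subset S x
    have hCpre : IsPreconnected C := isPreconnected_connectedComponentIn
    have hCclosed : IsClosed C := by
      apply isClosed_of_closure_subset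
      exact IsPreconnected.subset_connectedComponentIn hCpre.closure
        (subset_closure hxC) (closure_minimal hCS hSclosed)
    have hord : Set.OrdConnected C := hCpre.ordConnected
    -- a key contradiction: S can't contain points with sin = 1 and sin = -1
    have hcontra : ∀ t s : ℝ, t ∈ S → s ∈ S →
        Real.sin t = Real.sin (Real.pi / 2) → Real.sin s = Real.sin (-(Real.pi / 2)) →
        False := by
      intro t s ht hs hsint hsins
      rw [Real.sin_pi_div_two] at hsint
      rw [Real.sin_neg, Real.sin_pi_div_two] at hsins
      have h1 : c₁ t ≤ p := ht.1
      have h2 : p ≤ c₂ s := hs.2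
      rw [hc₁, hsint] at h1
      rw [hc₂, hsins] at h2
      have := (key t).1
      linarith
    have hbddA : BddAbove C := by
      by_contra hb
      rw [not_bddAbove_iff] at hb
      have hsub : ∀ t : ℝ, x ≤ t → t ∈ C := by
        intro t hxt
        obtain ⟨y, hyC, hty⟩ := hb t
        exact hord.out hxC hyC ⟨hxt, hty.le⟩
      obtain ⟨t, ht, hsint⟩ := exists_sin_eq_ge x (Real.pi / 2)
      obtain ⟨s, hs, hsins⟩ := exists_sin_eq_ge x (-(Real.pi / 2))
      exact hcontra t s (hCS (hsub t ht)) (hCS (hsub s hs)) hsint hsins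
    have hbddB : BddBelow C := by
      by_contra hb
      rw [not_bddBelow_iff] at hb
      have hsub : ∀ t : ℝ, t ≤ x → t ∈ C := by
        intro t hxt
        obtain ⟨y, hyC, hty⟩ := hb t
        exact hord.out hyC hxC ⟨hty.le, hxt⟩
      obtain ⟨t, ht, hsint⟩ := exists_sin_eq_le x (Real.pi / 2)
      obtain ⟨s, hs, hsins⟩ := exists_sin_eq_le x (-(Real.pi / 2))
      exact hcontra t s (hCS (hsub t ht)) (hCS (hsub s hs)) hsint hsins
    exact Metric.isCompact_of_isClosed_isBounded hCclosed
      (isBounded_iff_bddBelow_bddAbove.mpr ⟨hbddB, hbddA⟩)
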